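/- Let a > b > 0 and C₁ > 0, C₂ > 0 be real numbers. Then the series ∑_{l=0}^∞ [ 1 − (max(1 − C₁ · 2^{−l a}, 0))^{C₂ · 2^{l b}} ] converges (its partial sums are bounded). -/

import Mathlib

/-- For `a > b > 0` and `C₁, C₂ > 0`, the series
`∑_l [1 - (max (1 - C₁ 2^{-l a}) 0)^{C₂ 2^{l b}}]` is summable. -/
theorem summable_borel_cantelli_bound (a b C₁ C₂ : ℝ) (hab : b < a) (hb : 0 < b)
    (hC₁ : 0 < C₁) (hC₂ : 0 < C₂) :
    Summable fun l : ℕ =>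
      1 - (max (1 - C₁ * (2 : ℝ) ^ (-(l : ℝ) * a)) 0) ^ (C₂ * (2 : ℝ) ^ ((l : ℝ) * b)) := by
  have h2 : (1:ℝ) < 2 := one_lt_two
  -- geometric-type majorant
  set g : ℕ → ℝ := fun l => (2 : ℝ) ^ (-(l : ℝ) * (a - b)) with hg
  have hgsum : Summable g := by
    have hr : (2 : ℝ) ^ (-(a - b)) < 1 :=
      Real.rpow_lt_one_of_one_lt_of_neg h2 (by linarith)
    have hr0 : (0:ℝ) ≤ (2 : ℝ) ^ (-(a - b)) := (Real.rpow_pos_of_pos two_pos _).le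
    have := summable_geometric_of_lt_one hr0 hr
    refine this.congr fun l => ?_
    rw [← Real.rpow_natCast ((2:ℝ) ^ (-(a-b))) l, ← Real.rpow_mul (by norm_num)]
    simp only [hg]
    ring_nf
  -- each term is nonnegative
  have hnn : ∀ l : ℕ,
      0 ≤ 1 - (max (1 - C₁ * (2 : ℝ) ^ (-(l : ℝ) * a)) 0) ^ (C₂ * (2 : ℝ) ^ ((l : ℝ) * b)) := by
    intro l
    have hx0 : (0:ℝ) ≤ max (1 - C₁ * (2 : ℝ) ^ (-(l : ℝ) * a)) 0 := le_max_right _ _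
    have hx1 : max (1 - C₁ * (2 : ℝ) ^ (-(l : ℝ) * a)) 0 ≤ 1 := by
      have : 1 - C₁ * (2 : ℝ) ^ (-(l : ℝ) * a) ≤ 1 := by
        nlinarith [Real.rpow_pos_of_pos (two_pos : (0:ℝ) < 2) (-(l : ℝ) * a)]
      exact max_le this zero_le_one
    have := Real.rpow_le_one hx0 hx1
      (by positivity : 0 ≤ C₂ * (2 : ℝ) ^ ((l : ℝ) * b))
    linarith
  refine summable_of_isBigO_nat hgsum ?_
  rw [Asymptotics.isBigO_iff]
  refine ⟨C₁ * C₂, ?_⟩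
  -- eventual smallness of C₁ 2^{-la} and largeness of C₂ 2^{lb}
  have h1 : ∀ᶠ l : ℕ in Filter.atTop, C₁ * (2 : ℝ) ^ (-(l : ℝ) * a) ≤ 1 := by
    have hlim : Filter.Tendsto (fun l : ℕ => C₁ * (2 : ℝ) ^ (-(l : ℝ) * a))
        Filter.atTop (nhds (C₁ * 0)) := by
      apply Filter.Tendsto.const_mul
      have : Filter.Tendsto (fun l : ℕ => -(l : ℝ) * a) Filter.atTop Filter.atBot := by
        apply Filter.Tendsto.atBot_mul_const (by linarith : 0 < a)
        exact Filter.tendsto_neg_atBot_iff.mpr tendsto_natCast_atTop_atTop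
      exact (tendsto_rpow_atBot_of_base_gt_one 2 h2).comp this
    rw [mul_zero] at hlim
    exact hlim.eventually_le_const one_pos
  have h2' : ∀ᶠ l : ℕ in Filter.atTop, 1 ≤ C₂ * (2 : ℝ) ^ ((l : ℝ) * b) := by
    have hlim : Filter.Tendsto (fun l : ℕ => C₂ * (2 : ℝ) ^ ((l : ℝ) * b))
        Filter.atTop Filter.atTop := by
      apply Filter.Tendsto.const_mul_atTop hC₂
      have hexp : Filter.Tendsto (fun y : ℝ => (2:ℝ) ^ y) Filter.atTop Filter.atTop := by
        simp_rw [Real.rpow_def_of_pos two_pos]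
        exact Real.tendsto_exp_atTop.comp
          ((Filter.tendsto_const_mul_atTop_of_pos (Real.log_pos h2)).mpr Filter.tendsto_id)
      exact hexp.comp (Filter.Tendsto.atTop_mul_const hb tendsto_natCast_atTop_atTop)
    exact hlim.eventually_ge_atTop 1
  filter_upwards [h1, h2'] with l hx ht
  set x := C₁ * (2 : ℝ) ^ (-(l : ℝ) * a) with hxdef
  set t := C₂ * (2 : ℝ) ^ ((l : ℝ) * b) with htdef
  have hxpos : 0 < x := by positivity
  have hmax : max (1 - x) 0 = 1 - x := max_eq_left (by linarith)
  have hbern : 1 + t * (-x) ≤ (1 + (-x)) ^ t :=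
    one_add_mul_self_le_rpow_one_add (by linarith) ht
  have hterm : 1 - (max (1 - x) 0) ^ t ≤ t * x := by
    rw [hmax]
    have : (1 - x) = 1 + (-x) := by ring
    rw [this]
    nlinarith
  have htx : t * x = C₁ * C₂ * (2 : ℝ) ^ (-(l : ℝ) * (a - b)) := by
    rw [show -(l:ℝ) * (a - b) = (l:ℝ) * b + (-(l:ℝ) * a) by ring,
      Real.rpow_add two_pos]
    ring
  rw [Real.norm_eq_abs, Real.norm_eq_abs, abs_of_nonneg (hnn l),
    abs_of_nonneg (Real.rpow_pos_of_pos two_pos _).le]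
  calc 1 - (max (1 - x) 0) ^ t ≤ t * x := hterm
    _ = C₁ * C₂ * (2 : ℝ) ^ (-(l : ℝ) * (a - b)) := htx
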